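/- Let n₂ ≥ 1 and let f : (0,∞) → ℝ be the iterated Mellin convolution f = ϕ_{a'₁,c₁,d₁} ⋁ ⋯ ⋁ ϕ_{a'_{n₂},c_{n₂},d_{n₂}}, where a'_j > 0, c_j ≥ 0, d_j ≥ c_j + 1 for j = 1,…,n₂. Then f(t) > 0 for every 0 < t < 1 and f(t) = 0 for every t ≥ 1. -/

import Mathlib

open MeasureTheory Set

/-- `φ_{a,b}(t) = (1/a) t^{b/a} exp(−t^{1/a})`. -/
noncomputable def phiElem (a b : ℝ) : ℝ → ℝ :=
  fun t => (1 / a) * t ^ (b / a) * Real.exp (-(t ^ (1 / a)))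

/-- `ϕ_{a,b,c}(t) = t^{b/a} (1 − t^{1/a})^{c−b−1} / (a Γ(c−b))` for `0 < t < 1`, else `0`. -/
noncomputable def phi2Elem (a b c : ℝ) : ℝ → ℝ :=
  fun t => if t < 1 then
    (1 / (a * Real.Gamma (c - b))) * t ^ (b / a) * (1 - t ^ (1 / a)) ^ (c - b - 1)
  else 0

/-- `ψ_{a,b,c}(t) = (Γ(b+c)/a) t^{b/a} (1 + t^{1/a})^{−b−c}`. -/
noncomputable def psiElem (a b c : ℝ) : ℝ → ℝ :=
  fun t => (Real.Gamma (b + c) / a) * t ^ (b / a) * (1 + t ^ (1 / a)) ^ (-b - c)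

/-- `η_{a,b,c}(t) = t^{(1−c)/a} (t^{1/a} − 1)^{c−b−1} / (a Γ(c−b))` for `t > 1`, else `0`. -/
noncomputable def etaElem (a b c : ℝ) : ℝ → ℝ :=
  fun t => if 1 < t then
    (1 / (a * Real.Gamma (c - b))) * t ^ ((1 - c) / a) * (t ^ (1 / a) - 1) ^ (c - b - 1)
  else 0

/-- Mellin convolution of two functions on `(0, ∞)`. -/
noncomputable def mellinConv (g₁ g₂ : ℝ → ℝ) : ℝ → ℝ :=
  fun t => ∫ τ in Set.Ioi (0 : ℝ), g₁ (t / τ) * g₂ τ / τ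

/-- Iterated Mellin convolution of a (nonempty) list of functions, obtained by
folding the binary Mellin convolution; the value on the empty list is junk. -/
noncomputable def mellinConvList : List (ℝ → ℝ) → ℝ → ℝ
  | [] => fun _ => 0
  | g :: gs => gs.foldl mellinConv g

def Good (g : ℝ → ℝ) : Prop :=
  Measurable g ∧ (∀ t : ℝ, 0 < t → t < 1 → 0 < g t) ∧
  (∀ t : ℝ, 1 ≤ t → g t = 0) ∧
  ∃ C : ℝ, 0 ≤ C ∧ ∀ t : ℝ, 0 < t → t < 1 → g t ≤ C * t ^ (-(1/2) : ℝ)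

lemma Good.nonneg {g : ℝ → ℝ} (hg : Good g) {t : ℝ} (ht : 0 < t) : 0 ≤ g t := by
  rcases lt_or_ge t 1 with h | h
  · exact (hg.2.1 t ht h).le
  · exact (hg.2.2.1 t h).ge

lemma step {g φ : ℝ → ℝ} (hg : Good g) (hφ : Good φ)
    {K : ℝ} (hK0 : 0 ≤ K) (hK : ∀ t : ℝ, 0 < t → t < 1 → φ t ≤ K) :
    Good (mellinConv g φ) := by
  obtain ⟨gm, gpos, gz, C, hC0, hCb⟩ := hg
  obtain ⟨φm, φpos, φz, _⟩ := hφ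
  have φnn : ∀ t : ℝ, 0 < t → 0 ≤ φ t := fun t ht => by
    rcases lt_or_ge t 1 with h | h
    · exact (φpos t ht h).le
    · exact (φz t h).ge
  have gnn : ∀ t : ℝ, 0 < t → 0 ≤ g t := fun t ht => by
    rcases lt_or_ge t 1 with h | h
    · exact (gpos t ht h).le
    · exact (gz t h).ge
  -- the integrand
  set h : ℝ → ℝ → ℝ := fun t τ => g (t / τ) * φ τ / τ with hh
  have hmeas : ∀ t, Measurable (h t) := fun t =>
    ((gm.comp (measurable_const.div measurable_id)).mul φm).div measurable_id
  -- support claim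
  have hsupp : ∀ t : ℝ, 0 < t → ∀ τ ∈ Ioi (0:ℝ) \ Ioo t 1, h t τ = 0 := by
    intro t ht τ hτ
    obtain ⟨hτ0, hτ'⟩ := hτ
    simp only [mem_Ioo, not_and_or, not_lt] at hτ'
    rcases hτ' with hτt | hτ1
    · have : (1:ℝ) ≤ t / τ := (one_le_div (mem_Ioi.1 hτ0)).2 hτt
      simp [hh, gz _ this]
    · simp [hh, φz _ hτ1]
  -- zero on [1, ∞)
  have hzero : ∀ t : ℝ, 1 ≤ t → mellinConv g φ t = 0 := by
    intro t ht
    rw [mellinConv]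
    apply setIntegral_eq_zero_of_forall_eq_zero
    intro τ hτ
    have ht0 : (0:ℝ) < t := lt_of_lt_of_le one_pos ht
    rcases lt_or_ge τ 1 with h1 | h1
    · have : (1:ℝ) ≤ t / τ := (one_le_div (mem_Ioi.1 hτ)).2 (h1.le.trans ht)
      simp [gz _ this]
    · simp [φz _ h1]
  -- pointwise bound on Ioo t 1
  have hptb : ∀ t : ℝ, 0 < t → t < 1 → ∀ τ ∈ Ioo t 1,
      h t τ ≤ C * K * t ^ (-(1/2):ℝ) * τ ^ (-(1/2):ℝ) := by
    intro t ht ht1 τ hτ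
    obtain ⟨hτt, hτ1⟩ := hτ
    have hτ0 : 0 < τ := ht.trans hτt
    have hq0 : 0 < t / τ := div_pos ht hτ0
    have hq1 : t / τ < 1 := (div_lt_one hτ0).2 hτt
    have h1 : g (t / τ) ≤ C * (t / τ) ^ (-(1/2):ℝ) := hCb _ hq0 hq1
    have h2 : φ τ ≤ K := hK τ hτ0 hτ1
    have key : (t / τ) ^ (-(1/2):ℝ) / τ = t ^ (-(1/2):ℝ) * τ ^ (-(1/2):ℝ) := by
      rw [Real.div_rpow ht.le hτ0.le, div_div]
      have e1 : τ ^ (-(1/2):ℝ) * τ = τ ^ ((1/2):ℝ) := by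
        nth_rewrite 2 [← Real.rpow_one τ]
        rw [← Real.rpow_add hτ0]; norm_num
      rw [e1, Real.rpow_neg hτ0.le, div_eq_mul_inv]
    have hnum : g (t / τ) * φ τ ≤ (C * (t / τ) ^ (-(1/2):ℝ)) * K :=
      mul_le_mul h1 h2 (φnn τ hτ0) (mul_nonneg hC0 (Real.rpow_nonneg hq0.le _))
    calc h t τ = g (t / τ) * φ τ / τ := rfl
      _ ≤ (C * (t / τ) ^ (-(1/2):ℝ)) * K / τ := by
          apply div_le_div_of_nonneg_right hnum hτ0.le
      _ = C * K * ((t / τ) ^ (-(1/2):ℝ) / τ) := by ring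
      _ = C * K * t ^ (-(1/2):ℝ) * τ ^ (-(1/2):ℝ) := by rw [key]; ring
  -- nonnegativity of integrand
  have hnn : ∀ t : ℝ, 0 < t → ∀ τ ∈ Ioo t 1, 0 ≤ h t τ := by
    intro t ht τ hτ
    have hτ0 : 0 < τ := ht.trans hτ.1
    exact div_nonneg (mul_nonneg (gnn _ (div_pos ht hτ0)) (φnn _ hτ0)) hτ0.le
  -- integrability of the bound
  have hbint : ∀ t : ℝ, 0 < t → t < 1 →
      IntegrableOn (fun τ : ℝ => C * K * t ^ (-(1/2):ℝ) * τ ^ (-(1/2):ℝ)) (Ioo t 1) := by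
    intro t ht ht1
    have h1 : IntervalIntegrable (fun x : ℝ => x ^ (-(1/2):ℝ)) volume t 1 :=
      intervalIntegral.intervalIntegrable_rpow' (by norm_num)
    have h2 : IntegrableOn (fun x : ℝ => x ^ (-(1/2):ℝ)) (Ioc t 1) :=
      (intervalIntegrable_iff_integrableOn_Ioc_of_le ht1.le).1 h1
    exact (h2.mono_set Ioo_subset_Ioc_self).const_mul _
  -- integrability of the integrand on Ioo t 1
  have hint0 : ∀ t : ℝ, 0 < t → t < 1 → IntegrableOn (h t) (Ioo t 1) := by
    intro t ht ht1
    apply Integrable.mono' (hbint t ht ht1) (hmeas t).aestronglyMeasurable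
    filter_upwards [ae_restrict_mem measurableSet_Ioo] with τ hτ
    rw [Real.norm_eq_abs, abs_of_nonneg (hnn t ht τ hτ)]
    exact hptb t ht ht1 τ hτ
  -- integrability on Ioi 0
  have hint : ∀ t : ℝ, 0 < t → t < 1 → IntegrableOn (h t) (Ioi 0) := by
    intro t ht ht1
    have h1 : IntegrableOn (h t) (Ioi 0 \ Ioo t 1) := by
      rw [integrableOn_congr_fun (hsupp t ht) (measurableSet_Ioi.diff measurableSet_Ioo)]
      exact integrableOn_zero
    refine ((hint0 t ht ht1).union h1).mono_set ?_
    intro x hx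
    by_cases hx2 : x ∈ Ioo t 1
    · exact Or.inl hx2
    · exact Or.inr ⟨hx, hx2⟩
  -- reduction of the integral to Ioo t 1
  have hred : ∀ t : ℝ, 0 < t → t < 1 →
      mellinConv g φ t = ∫ τ in Ioo t 1, h t τ := by
    intro t ht ht1
    apply setIntegral_eq_of_subset_of_ae_diff_eq_zero measurableSet_Ioi.nullMeasurableSet
    · intro x hx
      exact mem_Ioi.2 (ht.trans hx.1)
    · exact Filter.Eventually.of_forall (hsupp t ht)
  refine ⟨?_, ?_, hzero, ?_⟩
  · -- measurability
    have F : Measurable fun p : ℝ × ℝ => g (p.1 / p.2) * φ p.2 / p.2 :=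
      ((gm.comp (measurable_fst.div measurable_snd)).mul (φm.comp measurable_snd)).div
        measurable_snd
    exact F.stronglyMeasurable.integral_prod_right'.measurable
  · -- positivity
    intro t ht ht1
    rw [hred t ht ht1]
    refine (setIntegral_pos_iff_support_of_nonneg_ae ?_ (hint0 t ht ht1)).2 ?_
    · filter_upwards [ae_restrict_mem measurableSet_Ioo] with τ hτ using hnn t ht τ hτ
    · have hsub : Ioo t 1 ⊆ Function.support (h t) ∩ Ioo t 1 := by
        intro τ hτ
        have hτ0 : 0 < τ := ht.trans hτ.1
        have hq0 : 0 < t / τ := div_pos ht hτ0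
        have hq1 : t / τ < 1 := (div_lt_one hτ0).2 hτ.1
        refine ⟨?_, hτ⟩
        exact ne_of_gt (div_pos (mul_pos (gpos _ hq0 hq1) (φpos _ hτ0 hτ.2)) hτ0)
      calc (0:ENNReal) < volume (Ioo t 1) := by
            rw [Real.volume_Ioo]; exact ENNReal.ofReal_pos.2 (by linarith)
        _ ≤ volume (Function.support (h t) ∩ Ioo t 1) := measure_mono hsub
  · -- the bound
    refine ⟨2 * (C * K), by positivity, ?_⟩
    intro t ht ht1
    have hCK : (0:ℝ) ≤ C * K * t ^ (-(1/2):ℝ) :=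
      mul_nonneg (mul_nonneg hC0 hK0) (Real.rpow_nonneg ht.le _)
    have hIcalc : ∫ τ in Ioo t 1, (τ:ℝ) ^ (-(1/2):ℝ) ≤ 2 := by
      rw [← integral_Ioc_eq_integral_Ioo, ← intervalIntegral.integral_of_le ht1.le,
        integral_rpow (Or.inl (by norm_num))]
      have := Real.rpow_nonneg ht.le (-(1/2) + 1 : ℝ)
      rw [Real.one_rpow]
      norm_num
      linarith
    calc mellinConv g φ t = ∫ τ in Ioo t 1, h t τ := hred t ht ht1
      _ ≤ ∫ τ in Ioo t 1, C * K * t ^ (-(1/2):ℝ) * τ ^ (-(1/2):ℝ) := by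
          apply setIntegral_mono_on (hint0 t ht ht1) (hbint t ht ht1) measurableSet_Ioo
          exact hptb t ht ht1
      _ = (C * K * t ^ (-(1/2):ℝ)) * ∫ τ in Ioo t 1, (τ:ℝ) ^ (-(1/2):ℝ) := by
          rw [← integral_const_mul]
      _ ≤ (C * K * t ^ (-(1/2):ℝ)) * 2 := mul_le_mul_of_nonneg_left hIcalc hCK
      _ = 2 * (C * K) * t ^ (-(1/2):ℝ) := by ring

lemma phi2_good {a b c : ℝ} (ha : 0 < a) (hb : 0 ≤ b) (hc : b + 1 ≤ c) :
    Good (phi2Elem a b c) := by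
  have hG : 0 < Real.Gamma (c - b) := Real.Gamma_pos_of_pos (by linarith)
  have hK : 0 < 1 / (a * Real.Gamma (c - b)) := by positivity
  refine ⟨?_, ?_, ?_, ?_⟩
  · apply Measurable.ite (measurableSet_lt measurable_id measurable_const)
    · exact ((measurable_const.mul (measurable_id.pow_const _)).mul
        ((measurable_const.sub (measurable_id.pow_const _)).pow_const _))
    · exact measurable_const
  · intro t ht ht1
    have h1 : (0:ℝ) < t ^ (b / a) := Real.rpow_pos_of_pos ht _
    have h2 : t ^ (1 / a) < 1 := Real.rpow_lt_one ht.le ht1 (by positivity)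
    have h3 : (0:ℝ) < (1 - t ^ (1 / a)) ^ (c - b - 1) :=
      Real.rpow_pos_of_pos (by linarith) _
    rw [phi2Elem, if_pos ht1]
    positivity
  · intro t ht
    rw [phi2Elem, if_neg (not_lt.2 ht)]
  · refine ⟨1 / (a * Real.Gamma (c - b)), hK.le, ?_⟩
    intro t ht ht1
    have h1 : t ^ (b / a) ≤ 1 := Real.rpow_le_one ht.le ht1.le (by positivity)
    have h2 : (0:ℝ) ≤ t ^ (1 / a) := Real.rpow_nonneg ht.le _
    have h2' : t ^ (1 / a) < 1 := Real.rpow_lt_one ht.le ht1 (by positivity)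
    have h3 : (1 - t ^ (1 / a)) ^ (c - b - 1) ≤ 1 :=
      Real.rpow_le_one (by linarith) (by linarith) (by linarith)
    have h4 : (1:ℝ) ≤ t ^ (-(1/2) : ℝ) :=
      Real.one_le_rpow_of_pos_of_le_one_of_nonpos ht ht1.le (by norm_num)
    rw [phi2Elem, if_pos ht1]
    calc 1 / (a * Real.Gamma (c - b)) * t ^ (b / a) * (1 - t ^ (1 / a)) ^ (c - b - 1)
        ≤ 1 / (a * Real.Gamma (c - b)) * 1 * 1 := by
          apply mul_le_mul (mul_le_mul le_rfl h1 (Real.rpow_nonneg ht.le _) hK.le) h3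
            (Real.rpow_nonneg (by linarith) _) (by positivity)
      _ = 1 / (a * Real.Gamma (c - b)) * 1 := by ring
      _ ≤ 1 / (a * Real.Gamma (c - b)) * t ^ (-(1/2) : ℝ) := by
          exact mul_le_mul_of_nonneg_left h4 hK.le

lemma phi2_bdd {a b c : ℝ} (ha : 0 < a) (hb : 0 ≤ b) (hc : b + 1 ≤ c) :
    ∃ K : ℝ, 0 ≤ K ∧ ∀ t : ℝ, 0 < t → t < 1 → phi2Elem a b c t ≤ K := by
  have hG : 0 < Real.Gamma (c - b) := Real.Gamma_pos_of_pos (by linarith)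
  have hK : 0 < 1 / (a * Real.Gamma (c - b)) := by positivity
  refine ⟨1 / (a * Real.Gamma (c - b)), hK.le, ?_⟩
  intro t ht ht1
  have h1 : t ^ (b / a) ≤ 1 := Real.rpow_le_one ht.le ht1.le (by positivity)
  have h2 : (0:ℝ) ≤ t ^ (1 / a) := Real.rpow_nonneg ht.le _
  have h2' : t ^ (1 / a) < 1 := Real.rpow_lt_one ht.le ht1 (by positivity)
  have h3 : (1 - t ^ (1 / a)) ^ (c - b - 1) ≤ 1 :=
    Real.rpow_le_one (by linarith) (by linarith) (by linarith)
  rw [phi2Elem, if_pos ht1]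
  calc 1 / (a * Real.Gamma (c - b)) * t ^ (b / a) * (1 - t ^ (1 / a)) ^ (c - b - 1)
      ≤ 1 / (a * Real.Gamma (c - b)) * 1 * 1 :=
        mul_le_mul (mul_le_mul le_rfl h1 (Real.rpow_nonneg ht.le _) hK.le) h3
          (Real.rpow_nonneg (by linarith) _) (by positivity)
    _ = 1 / (a * Real.Gamma (c - b)) := by ring

/-- An admissible elementary factor. -/
def IsElem (φ : ℝ → ℝ) : Prop :=
  ∃ a b c : ℝ, 0 < a ∧ 0 ≤ b ∧ b + 1 ≤ c ∧ φ = phi2Elem a b c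

lemma foldl_good : ∀ (l : List (ℝ → ℝ)) (g : ℝ → ℝ),
    (∀ φ ∈ l, IsElem φ) → Good g → Good (l.foldl mellinConv g) := by
  intro l
  induction l with
  | nil => intro g _ hg; exact hg
  | cons φ l ih =>
    intro g hl hg
    obtain ⟨a, b, c, ha, hb, hc, rfl⟩ := hl φ List.mem_cons_self
    obtain ⟨K, hK0, hK⟩ := phi2_bdd ha hb hc
    exact ih (mellinConv g (phi2Elem a b c))
      (fun ψ hψ => hl ψ (List.mem_cons_of_mem _ hψ))
      (step hg (phi2_good ha hb hc) hK0 hK)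

theorem stmt_8 (n₂ : ℕ) (hn₂ : 1 ≤ n₂)
    (a' c d : Fin n₂ → ℝ)
    (ha' : ∀ j, 0 < a' j) (hc : ∀ j, 0 ≤ c j) (hd : ∀ j, c j + 1 ≤ d j)
    (f : ℝ → ℝ)
    (hf : f = mellinConvList (List.ofFn fun j => phi2Elem (a' j) (c j) (d j))) :
    (∀ t : ℝ, 0 < t → t < 1 → 0 < f t) ∧ (∀ t : ℝ, 1 ≤ t → f t = 0) := by
  obtain ⟨m, rfl⟩ : ∃ m, n₂ = m + 1 := ⟨n₂ - 1, (Nat.succ_pred_eq_of_pos hn₂).symm⟩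
  rw [List.ofFn_succ] at hf
  have hgood : Good f := by
    rw [hf]
    show Good (mellinConvList (_ :: _))
    rw [show ∀ g gs, mellinConvList (g :: gs) = gs.foldl mellinConv g from fun _ _ => rfl]
    apply foldl_good
    · intro φ hφ
      rw [List.mem_ofFn] at hφ
      obtain ⟨j, rfl⟩ := hφ
      exact ⟨_, _, _, ha' _, hc _, hd _, rfl⟩
    · exact phi2_good (ha' 0) (hc 0) (hd 0)
  exact ⟨hgood.2.1, hgood.2.2.1⟩
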